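/- The double integral ∫₀¹∫₀¹ √(u² + v²) · 4(1−u)(1−v) du dv equals (2 + √2 + 5·ln(1 + √2))/15. -/

import Mathlib

open MeasureTheory Real Filter Topology

/-! ### Derivative helpers -/

lemma DIV_hsqrt_deriv (v : ℝ) (hv : 0 < v) (u : ℝ) :
    HasDerivAt (fun u : ℝ => Real.sqrt (u ^ 2 + v ^ 2)) (u / Real.sqrt (u ^ 2 + v ^ 2)) u := by
  have h0 : u ^ 2 + v ^ 2 ≠ 0 := by positivity
  have h1 : HasDerivAt (fun u : ℝ => u ^ 2 + v ^ 2) (2 * u) u := by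
    simpa using (hasDerivAt_pow 2 u).add_const (v ^ 2)
  have := (Real.hasDerivAt_sqrt h0).comp u h1
  refine HasDerivAt.congr_deriv this (Eq.symm ?_)
  field_simp

lemma DIV_inner_antideriv (v : ℝ) (hv : 0 < v) (u : ℝ) :
    HasDerivAt (fun u : ℝ => 4 * (1 - v) *
        ((u * Real.sqrt (u ^ 2 + v ^ 2) + v ^ 2 * Real.arsinh (u / v)) / 2
          - Real.sqrt (u ^ 2 + v ^ 2) ^ 3 / 3))
      (Real.sqrt (u ^ 2 + v ^ 2) * (4 * (1 - u) * (1 - v))) u := by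
  have hspos : 0 < Real.sqrt (u ^ 2 + v ^ 2) :=
    Real.sqrt_pos.mpr (by positivity)
  set s := Real.sqrt (u ^ 2 + v ^ 2) with hs
  have hs2 : s ^ 2 = u ^ 2 + v ^ 2 := Real.sq_sqrt (by positivity)
  have hsne : s ≠ 0 := ne_of_gt hspos
  have hvne : v ≠ 0 := ne_of_gt hv
  have hsq : Real.sqrt (1 + (u / v) ^ 2) = s / v := by
    rw [show 1 + (u / v) ^ 2 = (u ^ 2 + v ^ 2) / v ^ 2 by field_simp; ring,
      Real.sqrt_div (by positivity), Real.sqrt_sq hv.le]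
  have h1 : HasDerivAt (fun u : ℝ => u * Real.sqrt (u ^ 2 + v ^ 2))
      (1 * s + u * (u / s)) u := (hasDerivAt_id u).mul (DIV_hsqrt_deriv v hv u)
  have h2 : HasDerivAt (fun u : ℝ => Real.arsinh (u / v))
      ((s / v)⁻¹ * (1 / v)) u := by
    have hd : HasDerivAt (fun u : ℝ => u / v) (1 / v) u := (hasDerivAt_id u).div_const v
    have := (Real.hasDerivAt_arsinh (u / v)).comp u hd
    rwa [hsq] at this
  have h3 : HasDerivAt (fun u : ℝ => Real.sqrt (u ^ 2 + v ^ 2) ^ 3)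
      (3 * s ^ 2 * (u / s)) u := by
    refine ((DIV_hsqrt_deriv v hv u).pow 3).congr_deriv ?_
    norm_num
    rfl
  have H := ((((h1.add (h2.const_mul (v ^ 2))).div_const 2).sub (h3.div_const 3)).const_mul
    (4 * (1 - v)))
  refine HasDerivAt.congr_deriv H (Eq.symm ?_)
  field_simp
  linear_combination (1 - v) * hs2

lemma DIV_inner_value (v : ℝ) (hv : 0 < v) :
    (∫ u in Set.Icc (0:ℝ) 1, Real.sqrt (u ^ 2 + v ^ 2) * (4 * (1 - u) * (1 - v)))
      = 4 * (1 - v) * ((Real.sqrt (1 + v ^ 2) + v ^ 2 * Real.arsinh (1 / v)) / 2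
          - Real.sqrt (1 + v ^ 2) ^ 3 / 3 + v ^ 3 / 3) := by
  rw [MeasureTheory.integral_Icc_eq_integral_Ioc,
    ← intervalIntegral.integral_of_le (zero_le_one)]
  rw [intervalIntegral.integral_eq_sub_of_hasDerivAt
    (fun u _ => DIV_inner_antideriv v hv u)
    (by apply Continuous.intervalIntegrable; fun_prop)]
  have h0 : Real.sqrt ((0:ℝ) ^ 2 + v ^ 2) = v := by
    rw [show (0:ℝ) ^ 2 + v ^ 2 = v ^ 2 by ring, Real.sqrt_sq hv.le]
  have h1 : ((1:ℝ) ^ 2 + v ^ 2) = 1 + v ^ 2 := by norm_num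
  rw [h1, h0]
  simp [Real.arsinh_zero]
  ring

/-! ### Continuity of `v ↦ v² · arsinh (1/v)` on `[0,1]` -/

lemma DIV_psi_tendsto : Filter.Tendsto (fun v : ℝ => v ^ 2 * Real.arsinh (1 / v))
    (𝓝[>] (0:ℝ)) (𝓝 0) := by
  have hupper : Filter.Tendsto (fun v : ℝ => v ^ 2 * Real.log 3 - v ^ 2 * Real.log v)
      (𝓝[>] (0:ℝ)) (𝓝 0) := by
    have h1 : Filter.Tendsto (fun v : ℝ => v ^ 2 * Real.log 3) (𝓝[>] (0:ℝ)) (𝓝 0) := by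
      have hc : Continuous (fun v : ℝ => v ^ 2 * Real.log 3) := by fun_prop
      have h := hc.tendsto 0
      norm_num at h
      exact h.mono_left nhdsWithin_le_nhds
    have h2 : Filter.Tendsto (fun v : ℝ => v ^ 2 * Real.log v) (𝓝[>] (0:ℝ)) (𝓝 0) := by
      have := tendsto_log_mul_rpow_nhdsGT_zero (r := 2) (by norm_num)
      refine this.congr' ?_
      filter_upwards [self_mem_nhdsWithin] with v hv
      rw [show (2:ℝ) = ((2:ℕ):ℝ) by norm_num, Real.rpow_natCast]
      ring
    simpa using h1.sub h2
  refine tendsto_of_tendsto_of_tendsto_of_le_of_le' tendsto_const_nhds hupper ?_ ?_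
  · filter_upwards [self_mem_nhdsWithin] with v hv
    have hv' : (0:ℝ) < v := hv
    exact mul_nonneg (sq_nonneg v) (Real.arsinh_nonneg_iff.mpr (by positivity))
  · filter_upwards [Ioc_mem_nhdsGT_of_mem (Set.left_mem_Ico.mpr one_pos)] with v hv
    obtain ⟨hv0, hv1⟩ := hv
    have hvne : v ≠ 0 := ne_of_gt hv0
    have hsqrtle : Real.sqrt (1 + (1 / v) ^ 2) ≤ 2 / v := by
      rw [show 2 / v = Real.sqrt ((2 / v) ^ 2) from (Real.sqrt_sq (by positivity)).symm]
      apply Real.sqrt_le_sqrt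
      have h1 : (1:ℝ) ≤ 1 / v ^ 2 := by
        rw [le_div_iff₀ (by positivity)]
        nlinarith
      rw [div_pow, one_pow, div_pow]
      have h4 : (2:ℝ) ^ 2 / v ^ 2 = 4 * (1 / v ^ 2) := by ring
      rw [h4]
      linarith
    have harsinh : Real.arsinh (1 / v) ≤ Real.log 3 - Real.log v := by
      rw [Real.arsinh, ← Real.log_div (by norm_num) hvne]
      apply Real.log_le_log (by positivity)
      have h3 : (3:ℝ) / v = 1 / v + 2 / v := by ring
      rw [h3]
      exact add_le_add_right hsqrtle _
    calc v ^ 2 * Real.arsinh (1 / v) ≤ v ^ 2 * (Real.log 3 - Real.log v) :=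
          mul_le_mul_of_nonneg_left harsinh (sq_nonneg v)
      _ = v ^ 2 * Real.log 3 - v ^ 2 * Real.log v := by ring

lemma DIV_psi_contOn :
    ContinuousOn (fun v : ℝ => v ^ 2 * Real.arsinh (1 / v)) (Set.Icc (0:ℝ) 1) := by
  intro v hv
  rcases eq_or_ne v 0 with rfl | hv0
  · rw [← continuousWithinAt_diff_self]
    have hsub : Set.Icc (0:ℝ) 1 \ {0} ⊆ Set.Ioi 0 :=
      fun x hx => lt_of_le_of_ne hx.1.1 (Ne.symm hx.2)
    have h := DIV_psi_tendsto.mono_left (nhdsWithin_mono (0:ℝ) hsub)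
    unfold ContinuousWithinAt
    convert h using 2
    simp
  · apply ContinuousAt.continuousWithinAt
    have h1 : ContinuousAt (fun x : ℝ => 1 / x) v :=
      ContinuousAt.div continuousAt_const continuousAt_id hv0
    have h2 : ContinuousAt (fun x : ℝ => Real.arsinh (1 / x)) v :=
      Real.continuous_arsinh.continuousAt.comp h1
    have h3 : ContinuousAt (fun x : ℝ => x ^ 2) v := by fun_prop
    exact h3.mul h2

/-! ### Outer antiderivative pieces -/

lemma DIV_hS_deriv (v : ℝ) :
    HasDerivAt (fun v : ℝ => Real.sqrt (1 + v ^ 2)) (v / Real.sqrt (1 + v ^ 2)) v := by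
  have h0 : 1 + v ^ 2 ≠ 0 := by positivity
  have h1 : HasDerivAt (fun v : ℝ => 1 + v ^ 2) (2 * v) v := by
    simpa using (hasDerivAt_pow 2 v).const_add 1
  have := (Real.hasDerivAt_sqrt h0).comp v h1
  refine HasDerivAt.congr_deriv this (Eq.symm ?_)
  field_simp

section C
variable (v : ℝ)

lemma DIV_hSpos : 0 < Real.sqrt (1 + v ^ 2) := Real.sqrt_pos.mpr (by positivity)
lemma DIV_hS2 : Real.sqrt (1 + v ^ 2) ^ 2 = 1 + v ^ 2 := Real.sq_sqrt (by positivity)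

lemma DIV_C1 : HasDerivAt (fun v : ℝ => (v * Real.sqrt (1 + v ^ 2) + Real.arsinh v) / 2)
    (Real.sqrt (1 + v ^ 2)) v := by
  have h := (((hasDerivAt_id v).mul (DIV_hS_deriv v)).add (Real.hasDerivAt_arsinh v)).div_const 2
  refine HasDerivAt.congr_deriv h (Eq.symm ?_)
  have h2 := DIV_hS2 v
  have hne : Real.sqrt (1 + v ^ 2) ≠ 0 := ne_of_gt (DIV_hSpos v)
  field_simp
  simp only [id_eq]
  linear_combination h2

lemma DIV_C2 : HasDerivAt (fun v : ℝ => Real.sqrt (1 + v ^ 2) ^ 3 / 3)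
    (v * Real.sqrt (1 + v ^ 2)) v := by
  have h := ((DIV_hS_deriv v).pow 3).div_const 3
  refine HasDerivAt.congr_deriv h (Eq.symm ?_)
  have h2 := DIV_hS2 v
  have hne : Real.sqrt (1 + v ^ 2) ≠ 0 := ne_of_gt (DIV_hSpos v)
  field_simp
  linear_combination

lemma DIV_C3 : HasDerivAt (fun v : ℝ => Real.sqrt (1 + v ^ 2) ^ 5 / 5)
    (v * Real.sqrt (1 + v ^ 2) ^ 3) v := by
  have h := ((DIV_hS_deriv v).pow 5).div_const 5
  refine HasDerivAt.congr_deriv h (Eq.symm ?_)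
  have hne : Real.sqrt (1 + v ^ 2) ≠ 0 := ne_of_gt (DIV_hSpos v)
  field_simp
  ring

lemma DIV_C4 : HasDerivAt (fun v : ℝ =>
      v * Real.sqrt (1 + v ^ 2) ^ 3 / 4
        + 3 / 8 * (v * Real.sqrt (1 + v ^ 2) + Real.arsinh v))
    (Real.sqrt (1 + v ^ 2) ^ 3) v := by
  have h := (((hasDerivAt_id v).mul ((DIV_hS_deriv v).pow 3)).div_const 4).add
    ((((hasDerivAt_id v).mul (DIV_hS_deriv v)).add (Real.hasDerivAt_arsinh v)).const_mul (3/8))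
  refine HasDerivAt.congr_deriv h (Eq.symm ?_)
  have h2 := DIV_hS2 v
  have hne : Real.sqrt (1 + v ^ 2) ≠ 0 := ne_of_gt (DIV_hSpos v)
  field_simp
  simp only [id_eq, Pi.pow_apply]
  linear_combination (24 * Real.sqrt (1 + v ^ 2) ^ 2 + 12) * h2

lemma DIV_C8 : HasDerivAt (fun v : ℝ => 4 / 3 * (v ^ 4 / 4 - v ^ 5 / 5))
    (4 / 3 * (v ^ 3 - v ^ 4)) v := by
  have h := (((hasDerivAt_pow 4 v).div_const 4).sub
    ((hasDerivAt_pow 5 v).div_const 5)).const_mul (4/3)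
  refine HasDerivAt.congr_deriv h (Eq.symm ?_)
  push_cast
  ring

end C

section Cv
variable {v : ℝ} (hv : 0 < v)
include hv

lemma DIV_hA_deriv : HasDerivAt (fun v : ℝ => Real.arsinh (1 / v))
    (-(1 / (v * Real.sqrt (1 + v ^ 2)))) v := by
  have hvne : v ≠ 0 := ne_of_gt hv
  have h1 : HasDerivAt (fun v : ℝ => 1 / v) (-(1 / v ^ 2)) v := by
    simpa [one_div] using hasDerivAt_inv hvne
  have h := (Real.hasDerivAt_arsinh (1 / v)).comp v h1
  have hsq : Real.sqrt (1 + (1 / v) ^ 2) = Real.sqrt (1 + v ^ 2) / v := by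
    rw [show 1 + (1 / v) ^ 2 = (1 + v ^ 2) / v ^ 2 by field_simp; ring,
      Real.sqrt_div (by positivity), Real.sqrt_sq hv.le]
  rw [hsq] at h
  refine HasDerivAt.congr_deriv h (Eq.symm ?_)
  have hne : Real.sqrt (1 + v ^ 2) ≠ 0 := ne_of_gt (DIV_hSpos v)
  field_simp

lemma DIV_hPsi_deriv : HasDerivAt (fun v : ℝ => v ^ 2 * Real.arsinh (1 / v))
    (2 * v * Real.arsinh (1 / v) - v / Real.sqrt (1 + v ^ 2)) v := by
  have h := (hasDerivAt_pow 2 v).mul (DIV_hA_deriv hv)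
  refine HasDerivAt.congr_deriv h (Eq.symm ?_)
  have hne : Real.sqrt (1 + v ^ 2) ≠ 0 := ne_of_gt (DIV_hSpos v)
  have hvne : v ≠ 0 := ne_of_gt hv
  push_cast
  field_simp
  ring

lemma DIV_C6 : HasDerivAt (fun v : ℝ =>
      v * (v ^ 2 * Real.arsinh (1 / v)) / 3
        + (v * Real.sqrt (1 + v ^ 2) - Real.arsinh v) / 6)
    (v ^ 2 * Real.arsinh (1 / v)) v := by
  have h := (((hasDerivAt_id v).mul (DIV_hPsi_deriv hv)).div_const 3).add
    ((((hasDerivAt_id v).mul (DIV_hS_deriv v)).sub (Real.hasDerivAt_arsinh v)).div_const 6)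
  refine HasDerivAt.congr_deriv h (Eq.symm ?_)
  have h2 := DIV_hS2 v
  have hne : Real.sqrt (1 + v ^ 2) ≠ 0 := ne_of_gt (DIV_hSpos v)
  field_simp
  simp only [id_eq]
  linear_combination (-3) * h2

lemma DIV_C7 : HasDerivAt (fun v : ℝ =>
      v ^ 2 * (v ^ 2 * Real.arsinh (1 / v)) / 4
        + (Real.sqrt (1 + v ^ 2) ^ 3 / 3 - Real.sqrt (1 + v ^ 2)) / 4)
    (v ^ 3 * Real.arsinh (1 / v)) v := by
  have h := (((hasDerivAt_pow 2 v).mul (DIV_hPsi_deriv hv)).div_const 4).add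
    (((((DIV_hS_deriv v).pow 3).div_const 3).sub (DIV_hS_deriv v)).div_const 4)
  refine HasDerivAt.congr_deriv h (Eq.symm ?_)
  have h2 := DIV_hS2 v
  have hne : Real.sqrt (1 + v ^ 2) ≠ 0 := ne_of_gt (DIV_hSpos v)
  push_cast
  field_simp
  linear_combination (-1) * h2

end Cv

/-! ### The outer antiderivative -/

noncomputable def DIV_Phi (v : ℝ) : ℝ :=
  2 * ((v * Real.sqrt (1 + v ^ 2) + Real.arsinh v) / 2)
    - 2 * (Real.sqrt (1 + v ^ 2) ^ 3 / 3)
    + 2 * (v * (v ^ 2 * Real.arsinh (1 / v)) / 3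
        + (v * Real.sqrt (1 + v ^ 2) - Real.arsinh v) / 6)
    - 2 * (v ^ 2 * (v ^ 2 * Real.arsinh (1 / v)) / 4
        + (Real.sqrt (1 + v ^ 2) ^ 3 / 3 - Real.sqrt (1 + v ^ 2)) / 4)
    - 4 / 3 * (v * Real.sqrt (1 + v ^ 2) ^ 3 / 4
        + 3 / 8 * (v * Real.sqrt (1 + v ^ 2) + Real.arsinh v))
    + 4 / 3 * (Real.sqrt (1 + v ^ 2) ^ 5 / 5)
    + 4 / 3 * (v ^ 4 / 4 - v ^ 5 / 5)

lemma DIV_Phi_deriv {v : ℝ} (hv : 0 < v) :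
    HasDerivAt DIV_Phi
      (4 * (1 - v) * ((Real.sqrt (1 + v ^ 2) + v ^ 2 * Real.arsinh (1 / v)) / 2
          - Real.sqrt (1 + v ^ 2) ^ 3 / 3 + v ^ 3 / 3)) v := by
  have h := (((((((DIV_C1 v).const_mul 2).sub ((DIV_C2 v).const_mul 2)).add
      ((DIV_C6 hv).const_mul 2)).sub ((DIV_C7 hv).const_mul 2)).sub
      ((DIV_C4 v).const_mul (4/3))).add ((DIV_C3 v).const_mul (4/3))).add (DIV_C8 v)
  refine HasDerivAt.congr_deriv h (Eq.symm ?_)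
  ring

lemma DIV_Phi_contOn : ContinuousOn DIV_Phi (Set.Icc (0:ℝ) 1) := by
  have hψ := DIV_psi_contOn
  have hS : Continuous (fun v : ℝ => Real.sqrt (1 + v ^ 2)) := by fun_prop
  have har : Continuous Real.arsinh := Real.continuous_arsinh
  unfold DIV_Phi
  refine ((((((?_ : ContinuousOn _ _).sub ?_).add ?_).sub ?_).sub ?_).add ?_).add ?_
  · exact (Continuous.continuousOn (by fun_prop))
  · exact (Continuous.continuousOn (by fun_prop))
  · exact continuousOn_const.mul (((continuousOn_id.mul hψ).div_const 3).add
      (Continuous.continuousOn (by fun_prop)))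
  · exact continuousOn_const.mul ((((continuous_pow 2).continuousOn.mul hψ).div_const 4).add
      (Continuous.continuousOn (by fun_prop)))
  · exact (Continuous.continuousOn (by fun_prop))
  · exact (Continuous.continuousOn (by fun_prop))
  · exact (Continuous.continuousOn (by fun_prop))

lemma DIV_phi_contOn : ContinuousOn (fun v : ℝ =>
      4 * (1 - v) * ((Real.sqrt (1 + v ^ 2) + v ^ 2 * Real.arsinh (1 / v)) / 2
          - Real.sqrt (1 + v ^ 2) ^ 3 / 3 + v ^ 3 / 3)) (Set.Icc (0:ℝ) 1) := by
  have hψ := DIV_psi_contOn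
  refine (Continuous.continuousOn (by fun_prop) :
      ContinuousOn (fun v : ℝ => 4 * (1 - v)) _).mul ?_
  refine ContinuousOn.add (ContinuousOn.sub ?_ ?_) ?_
  · exact ((Continuous.continuousOn (by fun_prop)).add hψ).div_const 2
  · exact Continuous.continuousOn (by fun_prop)
  · exact Continuous.continuousOn (by fun_prop)

/-! ### Main theorem -/

/-- `∫₀¹∫₀¹ √(u²+v²) · 4(1-u)(1-v) du dv = (2 + √2 + 5 ln(1+√2))/15`. -/
theorem double_integral_value :
    (∫ v in Set.Icc (0:ℝ) 1, ∫ u in Set.Icc (0:ℝ) 1,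
        Real.sqrt (u ^ 2 + v ^ 2) * (4 * (1 - u) * (1 - v)))
    = (2 + Real.sqrt 2 + 5 * Real.log (1 + Real.sqrt 2)) / 15 := by
  have hout : (∫ v in Set.Icc (0:ℝ) 1, ∫ u in Set.Icc (0:ℝ) 1,
        Real.sqrt (u ^ 2 + v ^ 2) * (4 * (1 - u) * (1 - v)))
      = ∫ v in Set.Ioc (0:ℝ) 1,
          4 * (1 - v) * ((Real.sqrt (1 + v ^ 2) + v ^ 2 * Real.arsinh (1 / v)) / 2
            - Real.sqrt (1 + v ^ 2) ^ 3 / 3 + v ^ 3 / 3) := by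
    rw [MeasureTheory.integral_Icc_eq_integral_Ioc]
    exact setIntegral_congr_fun measurableSet_Ioc (fun v hv => DIV_inner_value v hv.1)
  rw [hout, ← intervalIntegral.integral_of_le zero_le_one]
  have hint : IntervalIntegrable (fun v : ℝ =>
      4 * (1 - v) * ((Real.sqrt (1 + v ^ 2) + v ^ 2 * Real.arsinh (1 / v)) / 2
        - Real.sqrt (1 + v ^ 2) ^ 3 / 3 + v ^ 3 / 3)) volume 0 1 := by
    apply ContinuousOn.intervalIntegrable
    rw [Set.uIcc_of_le zero_le_one]
    exact DIV_phi_contOn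
  rw [intervalIntegral.integral_eq_sub_of_hasDeriv_right_of_le zero_le_one DIV_Phi_contOn
    (fun x hx => (DIV_Phi_deriv hx.1).hasDerivWithinAt) hint]
  have harsinh1 : Real.arsinh 1 = Real.log (1 + Real.sqrt 2) := by
    rw [Real.arsinh]
    norm_num
  have hs2 : Real.sqrt 2 ^ 2 = 2 := Real.sq_sqrt (by norm_num)
  have h4 : Real.sqrt 2 ^ 4 = 4 := by
    rw [show (4:ℕ) = 2 * 2 from rfl, pow_mul, hs2]; norm_num
  have h3 : Real.sqrt 2 ^ 3 = 2 * Real.sqrt 2 := by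
    rw [pow_succ, hs2]
  have h5 : Real.sqrt 2 ^ 5 = 4 * Real.sqrt 2 := by
    rw [pow_succ, h4]
  unfold DIV_Phi
  norm_num [harsinh1]
  linarith [h3, h5]
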